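/- The polyhedral cone in ℝ^6 cut out by the conditions x_1 ≥ 0, x_2 ≥ 0, x_1+x_2+x_3 ≥ 0, x_1+x_2+x_4 ≥ 0, x_1+x_2+x_3+x_4 ≥ 0, x_1+x_2+x_3+x_4+x_5 ≥ 0, x_1+x_2+x_3+x_4+x_6 ≥ 0, x_1+⋯+x_6 = 0 equals the conical hull of the eight vectors e_1−e_3, e_1−e_4, e_2−e_3, e_2−e_4, e_3−e_5, e_3−e_6, e_4−e_5, e_4−e_6, i.e., the set of all nonnegative real combinations of these vectors. -/
import Mathlib


/-- The standard basis vector `eᵢ` of `ℝ⁶`. -/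
noncomputable def e (i : Fin 6) : Fin 6 → ℝ := Pi.single i 1

/-- The eight generating roots of the degree-2 standard nonplanar plate. -/
noncomputable def gens : Fin 8 → (Fin 6 → ℝ) :=
  ![e 0 - e 2, e 0 - e 3, e 1 - e 2, e 1 - e 3, e 2 - e 4, e 2 - e 5, e 3 - e 4, e 3 - e 5]

lemma sum_coords (t : Fin 8 → ℝ) :
    (∑ i, t i • gens i) 0 = t 0 + t 1 ∧
    (∑ i, t i • gens i) 1 = t 2 + t 3 ∧
    (∑ i, t i • gens i) 2 = -t 0 - t 2 + t 4 + t 5 ∧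
    (∑ i, t i • gens i) 3 = -t 1 - t 3 + t 6 + t 7 ∧
    (∑ i, t i • gens i) 4 = -t 4 - t 6 ∧
    (∑ i, t i • gens i) 5 = -t 5 - t 7 := by
  refine ⟨?_, ?_, ?_, ?_, ?_, ?_⟩ <;>
    · simp only [Finset.sum_apply, Fin.sum_univ_eight, Pi.smul_apply,
        show gens 0 = e 0 - e 2 from rfl, show gens 1 = e 0 - e 3 from rfl,
        show gens 2 = e 1 - e 2 from rfl, show gens 3 = e 1 - e 3 from rfl,
        show gens 4 = e 2 - e 4 from rfl, show gens 5 = e 2 - e 5 from rfl,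
        show gens 6 = e 3 - e 4 from rfl, show gens 7 = e 3 - e 5 from rfl,
        Pi.sub_apply, e, Pi.single_apply, smul_eq_mul]
      simp (config := { decide := true })
      try ring

lemma eq_of_coords (y z : Fin 6 → ℝ) (h0 : y 0 = z 0) (h1 : y 1 = z 1) (h2 : y 2 = z 2)
    (h3 : y 3 = z 3) (h4 : y 4 = z 4) (h5 : y 5 = z 5) : y = z := by
  funext j; fin_cases j <;> assumption

/-- The nonplanar plate, cut out by the inequalities, equals the conical hull of the eight
roots `e₁−e₃, e₁−e₄, e₂−e₃, e₂−e₄, e₃−e₅, e₃−e₆, e₄−e₅, e₄−e₆`. -/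
theorem plate_eq_conical_hull :
    {x : Fin 6 → ℝ |
        0 ≤ x 0 ∧ 0 ≤ x 1 ∧ 0 ≤ x 0 + x 1 + x 2 ∧ 0 ≤ x 0 + x 1 + x 3 ∧
        0 ≤ x 0 + x 1 + x 2 + x 3 ∧ 0 ≤ x 0 + x 1 + x 2 + x 3 + x 4 ∧
        0 ≤ x 0 + x 1 + x 2 + x 3 + x 5 ∧
        x 0 + x 1 + x 2 + x 3 + x 4 + x 5 = 0} =
    {y : Fin 6 → ℝ | ∃ t : Fin 8 → ℝ, (∀ i, 0 ≤ t i) ∧ y = ∑ i, t i • gens i} := by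
  ext x
  simp only [Set.mem_setOf_eq]
  constructor
  · rintro ⟨h0, h1, h2, h3, h4, h5, h6, hsum⟩
    set a := x 0 with ha
    set b := x 1 with hb
    set p : ℝ := max 0 (-(x 2)) with hp
    set t0 : ℝ := min a p with ht0
    set t2 : ℝ := p - t0 with ht2
    set t1 : ℝ := a - t0 with ht1
    set t3 : ℝ := b - t2 with ht3
    set u2 : ℝ := p + x 2 with hu2
    set c : ℝ := -(x 4) with hc
    set d : ℝ := -(x 5) with hd
    set t4 : ℝ := min u2 c with ht4
    set t5 : ℝ := u2 - t4 with ht5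
    set t6 : ℝ := c - t4 with ht6
    set t7 : ℝ := d - t5 with ht7
    have hp0 : 0 ≤ p := le_max_left _ _
    have hpx2 : -(x 2) ≤ p := le_max_right _ _
    have hu20 : 0 ≤ u2 := by simp only [hu2]; linarith
    have hc0 : 0 ≤ c := by simp only [hc]; linarith
    have hd0 : 0 ≤ d := by simp only [hd]; linarith
    have hpab : p ≤ a + b + x 3 := by
      rcases max_cases 0 (-(x 2)) with ⟨h, _⟩ | ⟨h, _⟩ <;> rw [hp, h] <;> linarith
    have hpab' : p ≤ a + b := by
      rcases max_cases 0 (-(x 2)) with ⟨h, _⟩ | ⟨h, _⟩ <;> rw [hp, h] <;> linarith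
    have hcd : c + d = u2 + (a + b + x 3 - p) := by
      simp only [hc, hd, hu2]; linarith
    refine ⟨![t0, t1, t2, t3, t4, t5, t6, t7], ?_, ?_⟩
    · intro i
      fin_cases i
      · show (0:ℝ) ≤ t0; exact le_min h0 hp0
      · show (0:ℝ) ≤ t1; simp only [ht1]; linarith [min_le_left a p]
      · show (0:ℝ) ≤ t2; simp only [ht2]; linarith [min_le_right a p]
      · show (0:ℝ) ≤ t3
        rcases min_cases a p with ⟨h, h'⟩ | ⟨h, h'⟩ <;>
          simp only [ht3, ht2, ht0, h] <;> linarith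
      · show (0:ℝ) ≤ t4; exact le_min hu20 hc0
      · show (0:ℝ) ≤ t5; simp only [ht5]; linarith [min_le_left u2 c]
      · show (0:ℝ) ≤ t6; simp only [ht6]; linarith [min_le_right u2 c]
      · show (0:ℝ) ≤ t7
        rcases min_cases u2 c with ⟨h, h'⟩ | ⟨h, h'⟩ <;>
          simp only [ht7, ht5, ht4, h] <;> linarith
    · obtain ⟨e0, e1, e2, e3, e4, e5⟩ := sum_coords ![t0, t1, t2, t3, t4, t5, t6, t7]
      simp only [show (![t0, t1, t2, t3, t4, t5, t6, t7] : Fin 8 → ℝ) 0 = t0 from rfl,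
        show (![t0, t1, t2, t3, t4, t5, t6, t7] : Fin 8 → ℝ) 1 = t1 from rfl,
        show (![t0, t1, t2, t3, t4, t5, t6, t7] : Fin 8 → ℝ) 2 = t2 from rfl,
        show (![t0, t1, t2, t3, t4, t5, t6, t7] : Fin 8 → ℝ) 3 = t3 from rfl,
        show (![t0, t1, t2, t3, t4, t5, t6, t7] : Fin 8 → ℝ) 4 = t4 from rfl,
        show (![t0, t1, t2, t3, t4, t5, t6, t7] : Fin 8 → ℝ) 5 = t5 from rfl,
        show (![t0, t1, t2, t3, t4, t5, t6, t7] : Fin 8 → ℝ) 6 = t6 from rfl,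
        show (![t0, t1, t2, t3, t4, t5, t6, t7] : Fin 8 → ℝ) 7 = t7 from rfl]
        at e0 e1 e2 e3 e4 e5
      refine eq_of_coords _ _ ?_ ?_ ?_ ?_ ?_ ?_ <;>
        [rw [e0]; rw [e1]; rw [e2]; rw [e3]; rw [e4]; rw [e5]] <;>
        simp only [ht7, ht6, ht5, ht3, ht2, ht1, hu2, hc, hd] <;> linarith
  · rintro ⟨t, ht, rfl⟩
    obtain ⟨e0, e1, e2, e3, e4, e5⟩ := sum_coords t
    have h0 := ht 0; have h1 := ht 1; have h2 := ht 2; have h3 := ht 3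
    have h4 := ht 4; have h5 := ht 5; have h6 := ht 6; have h7 := ht 7
    rw [e0, e1, e2, e3, e4, e5]
    refine ⟨by linarith, by linarith, by linarith, by linarith, by linarith,
      by linarith, by linarith, by linarith⟩
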